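/- If at every time slot the number of patients whose visit interval covers that slot is at most the number of available rooms, then there exists an assignment of each patient to a single room such that no two patients with overlapping visit intervals share a room. -/
import Mathlib


open Finset

/-- If at every time slot the number of patients whose visit interval covers that slot
is at most the number of rooms, there is a room assignment such that no two patients
with overlapping visit intervals share a room. -/
theorem stmt_0 {P R : Type*} [Fintype P] [Fintype R] [Nonempty R]
    (h v : P → ℕ)
    (hload : ∀ t : ℕ,
      (Finset.univ.filter (fun p : P => h p ≤ t ∧ t < h p + v p)).card ≤ Fintype.card R) :
    ∃ f : P → R, ∀ p q : P, p ≠ q →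
      (∃ t : ℕ, h p ≤ t ∧ t < h p + v p ∧ h q ≤ t ∧ t < h q + v q) →
      f p ≠ f q := by
  classical
  have hRpos : 0 < Fintype.card R := Fintype.card_pos
  suffices H : ∀ S : Finset P, ∃ f : P → R, ∀ p ∈ S, ∀ q ∈ S, p ≠ q →
      (∃ t : ℕ, h p ≤ t ∧ t < h p + v p ∧ h q ≤ t ∧ t < h q + v q) → f p ≠ f q by
    obtain ⟨f, hf⟩ := H Finset.univ
    exact ⟨f, fun p q hpq ht => hf p (mem_univ p) q (mem_univ q) hpq ht⟩
  intro S
  induction S using Finset.strongInduction with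
  | _ S ih =>
    rcases S.eq_empty_or_nonempty with rfl | hS
    · exact ⟨fun _ => Classical.arbitrary R, by simp⟩
    obtain ⟨p, hpS, hpmax⟩ := S.exists_max_image h hS
    obtain ⟨f, hf⟩ := ih (S.erase p) (Finset.erase_ssubset hpS)
    set T := (S.erase p).filter
      (fun q => ∃ t : ℕ, h p ≤ t ∧ t < h p + v p ∧ h q ≤ t ∧ t < h q + v q) with hTdef
    have hTcard : T.card < Fintype.card R := by
      rcases Nat.eq_zero_or_pos (v p) with hv | hv
      · have hTe : T = ∅ := by
          ext q
          simp only [hTdef, mem_filter, mem_erase, notMem_empty, iff_false, not_and]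
          rintro _ ⟨t, h1, h2, _⟩
          omega
        simpa [hTe] using hRpos
      · have hsub : T ⊆ (Finset.univ.filter
            (fun q : P => h q ≤ h p ∧ h p < h q + v q)).erase p := by
          intro q hq
          simp only [hTdef, mem_filter, mem_erase] at hq ⊢
          obtain ⟨⟨hqp, hqS⟩, t, h1, h2, h3, h4⟩ := hq
          exact ⟨hqp, mem_univ q, hpmax q hqS, by omega⟩
        have hpmem : p ∈ Finset.univ.filter
            (fun q : P => h q ≤ h p ∧ h p < h q + v q) := by
          simp only [mem_filter, mem_univ, true_and]
          omega
        calc T.card ≤ _ := card_le_card hsub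
          _ = (Finset.univ.filter
              (fun q : P => h q ≤ h p ∧ h p < h q + v q)).card - 1 :=
            card_erase_of_mem hpmem
          _ < (Finset.univ.filter
              (fun q : P => h q ≤ h p ∧ h p < h q + v q)).card :=
            Nat.sub_lt (card_pos.mpr ⟨p, hpmem⟩) one_pos
          _ ≤ Fintype.card R := hload (h p)
    have himg : ∃ r : R, r ∉ T.image f := by
      by_contra hc
      push_neg at hc
      have : (Finset.univ : Finset R) ⊆ T.image f := fun r _ => hc r
      have := card_le_card this
      have := (card_image_le (s := T) (f := f)).trans_lt hTcard
      simp only [card_univ] at *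
      omega
    obtain ⟨r, hr⟩ := himg
    refine ⟨Function.update f p r, ?_⟩
    intro a ha b hb hab hov
    have key : ∀ q, q ∈ S.erase p →
        (∃ t : ℕ, h p ≤ t ∧ t < h p + v p ∧ h q ≤ t ∧ t < h q + v q) →
        f q ≠ r := by
      intro q hq hovq hfq
      exact hr (mem_image.mpr ⟨q, by simp [hTdef, mem_filter, hq, hovq], hfq⟩)
    rcases eq_or_ne a p with rfl | hap
    · rcases eq_or_ne b a with rfl | hbp
      · exact absurd rfl hab
      · have hb' : b ∈ S.erase a := mem_erase.mpr ⟨hbp, hb⟩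
        rw [Function.update_self, Function.update_of_ne hbp]
        exact fun hh => key b hb' hov hh.symm
    · rcases eq_or_ne b p with rfl | hbp
      · have ha' : a ∈ S.erase b := mem_erase.mpr ⟨hap, ha⟩
        rw [Function.update_self, Function.update_of_ne hap]
        obtain ⟨t, h1, h2, h3, h4⟩ := hov
        exact key a ha' ⟨t, h3, h4, h1, h2⟩
      · rw [Function.update_of_ne hap, Function.update_of_ne hbp]
        exact hf a (mem_erase.mpr ⟨hap, ha⟩) b (mem_erase.mpr ⟨hbp, hb⟩) hab hov
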